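/- arXiv:2505.13660 — 4 statements merged into one kernel-verified Lean document; each statement's English description precedes it below -/
import Mathlib

section
/- Dual formula for the proximal value: for any Lipschitz continuous φ on convex compact Ω ⊂ ℝ^d, constant a > 0, and absolutely continuous probability measure μ on Ω, inf_{ρ ∈ P₂(Ω)} [ ∫_Ω φ dρ + (a/2) W₂²(μ, ρ) ] = ∫_Ω a · (−φ/a)^c dμ, where (−φ/a)^c(x) = inf_{y∈Ω} { ‖x−y‖²/2 + φ(y)/a }. -/
open MeasureTheory

lemma myiInf_comp_denseRange {α : Type*} [TopologicalSpace α] [Nonempty α]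
    {f : α → ℝ} (hf : Continuous f) {c : ℝ} (hc : ∀ y, c ≤ f y)
    {u : ℕ → α} (hu : DenseRange u) : ⨅ y, f y = ⨅ n, f (u n) := by
  have hbd : BddBelow (Set.range f) := ⟨c, by rintro _ ⟨y, rfl⟩; exact hc y⟩
  have hbd2 : BddBelow (Set.range fun n => f (u n)) := ⟨c, by rintro _ ⟨n, rfl⟩; exact hc _⟩
  refine le_antisymm (le_ciInf fun n => ciInf_le hbd (u n)) (le_ciInf fun y => ?_)
  have hclosed : IsClosed {z | (⨅ n, f (u n)) ≤ f z} := isClosed_le continuous_const hf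
  have hsub : Set.range u ⊆ {z | (⨅ n, f (u n)) ≤ f z} := by
    rintro _ ⟨n, rfl⟩; exact ciInf_le hbd2 n
  have h2 := hclosed.closure_subset_iff.2 hsub
  exact h2 (by rw [hu.closure_range]; trivial)

lemma mymeasurable_ciInf_nat {α : Type*} [MeasurableSpace α] {F : ℕ → α → ℝ}
    (hF : ∀ n, Measurable (F n)) {c : ℝ} (hc : ∀ n x, c ≤ F n x) :
    Measurable fun x => ⨅ n, F n x := by
  apply measurable_of_Iio
  intro t
  have hset : (fun x => ⨅ n, F n x) ⁻¹' Set.Iio t = ⋃ n, {x | F n x < t} := by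
    ext x
    simp only [Set.mem_preimage, Set.mem_Iio, Set.mem_iUnion, Set.mem_setOf_eq]
    constructor
    · exact fun h => exists_lt_of_ciInf_lt h
    · rintro ⟨n, hn⟩
      refine lt_of_le_of_lt (ciInf_le ⟨c, ?_⟩ n) hn
      rintro r ⟨m, rfl⟩; exact hc m x
  rw [hset]
  exact MeasurableSet.iUnion fun n => measurableSet_lt (hF n) measurable_const

abbrev Esp (d : ℕ) := EuclideanSpace ℝ (Fin d)

/-- The c-transform with cost `c(x,y) = ‖x-y‖²/2`, infimum taken over `Ω`. -/
noncomputable def ctrans {d : ℕ} (Ω : Set (EuclideanSpace ℝ (Fin d)))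
    (f : EuclideanSpace ℝ (Fin d) → ℝ) (x : EuclideanSpace ℝ (Fin d)) : ℝ :=
  ⨅ y : Ω, (‖x - (y : EuclideanSpace ℝ (Fin d))‖ ^ 2 / 2 - f y)

/-- The squared 2-Wasserstein distance, as the infimum of the transport cost over couplings. -/
noncomputable def W2sq {d : ℕ} (μ ν : Measure (EuclideanSpace ℝ (Fin d))) : ℝ :=
  sInf { r : ℝ | ∃ π : Measure (EuclideanSpace ℝ (Fin d) × EuclideanSpace ℝ (Fin d)),
    π.map Prod.fst = μ ∧ π.map Prod.snd = ν ∧ r = ∫ p, ‖p.1 - p.2‖ ^ 2 ∂π }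

set_option maxHeartbeats 1000000 in
/-- Dual formula for the proximal value: for Lipschitz `φ`, `a > 0` and an absolutely
continuous probability measure `μ` on a convex compact `Ω`,
`inf_ρ [∫ φ dρ + (a/2) W₂²(μ,ρ)] = ∫ a (−φ/a)^c dμ`. -/
theorem proximal_dual_formula {d : ℕ} (Ω : Set (EuclideanSpace ℝ (Fin d)))
    (hconv : Convex ℝ Ω) (hcomp : IsCompact Ω) (hne : Ω.Nonempty)
    (φ : EuclideanSpace ℝ (Fin d) → ℝ) (K : NNReal) (hφ : LipschitzOnWith K φ Ω)
    (a : ℝ) (ha : 0 < a)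
    (μ : Measure (EuclideanSpace ℝ (Fin d))) (hμ : IsProbabilityMeasure μ)
    (hμΩ : μ Ωᶜ = 0) (hac : μ ≪ volume) :
    sInf { v : ℝ | ∃ ρ : Measure (EuclideanSpace ℝ (Fin d)),
        IsProbabilityMeasure ρ ∧ ρ Ωᶜ = 0 ∧
        v = (∫ x, φ x ∂ρ) + a / 2 * W2sq μ ρ } =
      ∫ x, a * ctrans Ω (fun y => -(φ y) / a) x ∂μ := by
  classical
  haveI := hμ
  haveI : Nonempty Ω := hne.to_subtype
  obtain ⟨ψ, hψlip, hψeq⟩ := hφ.extend_real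
  have hψcont : Continuous ψ := hψlip.continuous
  have hΩmeas : MeasurableSet Ω := hcomp.isClosed.measurableSet
  -- the function G and its infimum g
  set G : (Esp d) → (Esp d) → ℝ := fun x y => ‖x - y‖ ^ 2 / 2 + ψ y / a with hGdef
  have hGcont : Continuous (fun p : (Esp d) × (Esp d) => G p.1 p.2) := by
    apply Continuous.add
    · exact (((continuous_fst.sub continuous_snd).norm.pow 2).div_const 2)
    · exact (hψcont.comp continuous_snd).div_const a
  set g : (Esp d) → ℝ := fun x => ⨅ y : Ω, G x (y : (Esp d)) with hgdef
  -- bounds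
  obtain ⟨Cψ, hCψ⟩ := hcomp.exists_bound_of_continuousOn hψcont.continuousOn
  have hCψ0 : 0 ≤ Cψ := le_trans (norm_nonneg _) (hCψ _ hne.choose_spec)
  obtain ⟨R, hR⟩ := hcomp.exists_bound_of_continuousOn continuous_id.continuousOn
  -- lower bound for G, uniform in x
  have hGlb : ∀ (x : (Esp d)) (y : Ω), -(Cψ / a) ≤ G x (y : (Esp d)) := by
    intro x y
    have h1 : -Cψ ≤ ψ (y : (Esp d)) := by
      have := hCψ _ y.2
      rw [Real.norm_eq_abs, abs_le] at this
      exact this.1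
    have h2 : -(Cψ / a) ≤ ψ (y : (Esp d)) / a := by
      rw [← neg_div]
      gcongr
    have h3 : (0:ℝ) ≤ ‖x - (y:(Esp d))‖ ^ 2 / 2 := by positivity
    simp only [hGdef]
    linarith
  have hgbddfam : ∀ x : (Esp d), BddBelow (Set.range fun y : Ω => G x (y : (Esp d))) := by
    intro x; exact ⟨-(Cψ / a), by rintro _ ⟨y, rfl⟩; exact hGlb x y⟩
  have hglb : ∀ x : (Esp d), -(Cψ / a) ≤ g x := fun x => le_ciInf (hGlb x)
  have hgle : ∀ (x : (Esp d)) {y : (Esp d)}, y ∈ Ω → g x ≤ G x y := by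
    intro x y hy
    exact ciInf_le (hgbddfam x) ⟨y, hy⟩
  -- dense sequence in Ω
  obtain ⟨u, hu⟩ := TopologicalSpace.exists_dense_seq Ω
  have hGycont : ∀ x : (Esp d), Continuous fun y : Ω => G x (y : (Esp d)) := by
    intro x
    simp only [hGdef]
    exact (((continuous_const.sub continuous_subtype_val).norm.pow 2).div_const 2).add
      ((hψcont.comp continuous_subtype_val).div_const a)
  have hgdense : ∀ x : (Esp d), g x = ⨅ n, G x ((u n : (Esp d))) :=
    fun x => myiInf_comp_denseRange (hGycont x) (hGlb x) hu
  -- measurability of g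
  have hFmeas : ∀ n : ℕ, Measurable fun x : (Esp d) => G x ((u n : (Esp d))) := by
    intro n
    simp only [hGdef]
    exact ((((continuous_id.sub continuous_const).norm.pow 2).div_const 2).add
      ((hψcont.comp continuous_const).div_const a)).measurable
  have hgmeas : Measurable g := by
    have := mymeasurable_ciInf_nat (F := fun n x => G x ((u n : (Esp d)))) hFmeas
      (c := -(Cψ / a)) (fun n x => hGlb x (u n))
    have heq : (fun x => ⨅ n, G x ((u n : (Esp d)))) = g := by
      funext x; rw [← hgdense x]
    rwa [heq] at this
  -- bound for g on Ω
  have hgub : ∀ x ∈ Ω, g x ≤ (2 * R) ^ 2 / 2 + Cψ / a := by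
    intro x hx
    obtain ⟨y₀, hy₀⟩ := hne
    refine le_trans (hgle x hy₀) ?_
    have h1 : ‖x - y₀‖ ≤ 2 * R := by
      calc ‖x - y₀‖ ≤ ‖x‖ + ‖y₀‖ := norm_sub_le _ _
        _ ≤ R + R := add_le_add (hR x hx) (hR y₀ hy₀)
        _ = 2 * R := by ring
    have h2 : ‖x - y₀‖ ^ 2 ≤ (2 * R) ^ 2 := by
      have := norm_nonneg (x - y₀); nlinarith
    have h3 : ψ y₀ ≤ Cψ := by
      have := hCψ _ hy₀; rw [Real.norm_eq_abs, abs_le] at this; exact this.2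
    have h4 : ψ y₀ / a ≤ Cψ / a := by gcongr
    simp only [hGdef]
    linarith
  set Cg : ℝ := (2 * R) ^ 2 / 2 + Cψ / a with hCgdef
  have hCψa : 0 ≤ Cψ / a := div_nonneg hCψ0 ha.le
  have hgabs : ∀ x ∈ Ω, |g x| ≤ Cg := by
    intro x hx
    rw [abs_le]
    constructor
    · have := hglb x
      have h5 : (0:ℝ) ≤ (2 * R) ^ 2 / 2 := by positivity
      simp only [hCgdef]; linarith
    · exact hgub x hx
  -- rewrite RHS
  have hctrans : ∀ x : (Esp d), ctrans Ω (fun y => -(φ y) / a) x = g x := by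
    intro x
    unfold ctrans
    apply iInf_congr
    intro y
    have hφy : φ (y : (Esp d)) = ψ (y : (Esp d)) := hψeq y.2
    simp only [hGdef, hφy]
    ring
  have hRHS : (∫ x, a * ctrans Ω (fun y => -(φ y) / a) x ∂μ) = ∫ x, a * g x ∂μ := by
    congr 1; funext x; rw [hctrans x]
  rw [hRHS]
  -- a.e. membership
  have hμae : ∀ᵐ x ∂μ, x ∈ Ω := by
    rw [MeasureTheory.ae_iff]
    simpa [Set.compl_def] using hμΩ
  -- integrability of a * g on μ
  have hagint : Integrable (fun x => a * g x) μ := by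
    refine ⟨((hgmeas.const_mul a).aestronglyMeasurable), ?_⟩
    apply HasFiniteIntegral.of_bounded (C := |a| * Cg)
    filter_upwards [hμae] with x hx
    rw [Real.norm_eq_abs, abs_mul]
    exact mul_le_mul_of_nonneg_left (hgabs x hx) (abs_nonneg a)
  -- LOWER BOUND: every element of the set is ≥ ∫ a * g dμ
  have hlow : ∀ v ∈ { v : ℝ | ∃ ρ : Measure (Esp d),
      IsProbabilityMeasure ρ ∧ ρ Ωᶜ = 0 ∧
      v = (∫ x, φ x ∂ρ) + a / 2 * W2sq μ ρ }, (∫ x, a * g x ∂μ) ≤ v := by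
    rintro v ⟨ρ, hρP, hρΩ, rfl⟩
    haveI := hρP
    have hρae : ∀ᵐ y ∂ρ, y ∈ Ω := by
      rw [MeasureTheory.ae_iff]; simpa [Set.compl_def] using hρΩ
    have hφψρ : (∫ x, φ x ∂ρ) = ∫ x, ψ x ∂ρ := by
      apply integral_congr_ae
      filter_upwards [hρae] with y hy
      exact hψeq hy
    rw [hφψρ]
    -- key estimate for any coupling
    have key : ∀ r ∈ { r : ℝ | ∃ π : Measure ((Esp d) × (Esp d)),
        π.map Prod.fst = μ ∧ π.map Prod.snd = ρ ∧ r = ∫ p, ‖p.1 - p.2‖ ^ 2 ∂π },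
        (∫ x, a * g x ∂μ) ≤ (∫ x, ψ x ∂ρ) + a / 2 * r := by
      rintro r ⟨π, hπ1, hπ2, rfl⟩
      have hπuniv : π Set.univ = 1 := by
        have h1 : π.map Prod.fst Set.univ = μ Set.univ := by rw [hπ1]
        rw [Measure.map_apply measurable_fst MeasurableSet.univ, Set.preimage_univ] at h1
        rw [h1, measure_univ]
      haveI : IsProbabilityMeasure π := ⟨hπuniv⟩
      have hπae1 : ∀ᵐ p ∂π, p.1 ∈ Ω := by
        rw [MeasureTheory.ae_iff]
        have : π {p : (Esp d) × (Esp d) | p.1 ∈ Ωᶜ} = 0 := by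
          have := Measure.map_apply (μ := π) measurable_fst hΩmeas.compl
          rw [hπ1, hμΩ] at this
          simpa [Set.preimage] using this.symm
        simpa [Set.compl_def] using this
      have hπae2 : ∀ᵐ p ∂π, p.2 ∈ Ω := by
        rw [MeasureTheory.ae_iff]
        have : π {p : (Esp d) × (Esp d) | p.2 ∈ Ωᶜ} = 0 := by
          have := Measure.map_apply (μ := π) measurable_snd hΩmeas.compl
          rw [hπ2, hρΩ] at this
          simpa [Set.preimage] using this.symm
        simpa [Set.compl_def] using this
      -- rewrite both integrals over π
      have hmap1 : (∫ x, a * g x ∂μ) = ∫ p, a * g p.1 ∂π := by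
        rw [← hπ1, integral_map measurable_fst.aemeasurable
          ((hgmeas.const_mul a).aestronglyMeasurable)]
      have hmap2 : (∫ x, ψ x ∂ρ) = ∫ p, ψ p.2 ∂π := by
        rw [← hπ2, integral_map measurable_snd.aemeasurable hψcont.aestronglyMeasurable]
      rw [hmap1, hmap2]
      -- integrability over π
      have hint1 : Integrable (fun p : (Esp d) × (Esp d) => a * g p.1) π := by
        refine ⟨((hgmeas.comp measurable_fst).const_mul a).aestronglyMeasurable, ?_⟩
        apply HasFiniteIntegral.of_bounded (C := |a| * Cg)
        filter_upwards [hπae1] with p hp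
        rw [Real.norm_eq_abs, abs_mul]
        exact mul_le_mul_of_nonneg_left (hgabs _ hp) (abs_nonneg a)
      have hint2 : Integrable (fun p : (Esp d) × (Esp d) => ψ p.2) π := by
        refine ⟨(hψcont.comp continuous_snd).aestronglyMeasurable, ?_⟩
        apply HasFiniteIntegral.of_bounded (C := Cψ)
        filter_upwards [hπae2] with p hp
        exact hCψ _ hp
      have hint3 : Integrable (fun p : (Esp d) × (Esp d) => ‖p.1 - p.2‖ ^ 2) π := by
        refine ⟨((continuous_fst.sub continuous_snd).norm.pow 2).aestronglyMeasurable, ?_⟩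
        apply HasFiniteIntegral.of_bounded (C := (2 * R) ^ 2)
        filter_upwards [hπae1, hπae2] with p hp1 hp2
        have h1 : ‖p.1 - p.2‖ ≤ 2 * R := by
          calc ‖p.1 - p.2‖ ≤ ‖p.1‖ + ‖p.2‖ := norm_sub_le _ _
            _ ≤ R + R := add_le_add (hR _ hp1) (hR _ hp2)
            _ = 2 * R := by ring
        rw [Real.norm_eq_abs, abs_of_nonneg (by positivity)]
        have := norm_nonneg (p.1 - p.2); nlinarith
      have hmono : (∫ p, a * g p.1 ∂π) ≤ ∫ p, (ψ p.2 + a / 2 * ‖p.1 - p.2‖ ^ 2) ∂π := by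
        apply integral_mono_ae hint1 (hint2.add (hint3.const_mul (a / 2)))
        filter_upwards [hπae1, hπae2] with p hp1 hp2
        simp only [Pi.add_apply]
        have h1 : g p.1 ≤ G p.1 p.2 := hgle p.1 hp2
        have h2 : a * g p.1 ≤ a * G p.1 p.2 := mul_le_mul_of_nonneg_left h1 ha.le
        have h3 : a * G p.1 p.2 = ψ p.2 + a / 2 * ‖p.1 - p.2‖ ^ 2 := by
          simp only [hGdef]
          field_simp
          ring
        calc a * g p.1 ≤ a * G p.1 p.2 := h2
          _ = ψ p.2 + a / 2 * ‖p.1 - p.2‖ ^ 2 := h3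
      rw [integral_add hint2 (hint3.const_mul (a / 2)),
        integral_const_mul (a / 2) (fun p : (Esp d) × (Esp d) => ‖p.1 - p.2‖ ^ 2)] at hmono
      exact hmono
    -- infimum over couplings
    have hne2 : { r : ℝ | ∃ π : Measure ((Esp d) × (Esp d)),
        π.map Prod.fst = μ ∧ π.map Prod.snd = ρ ∧ r = ∫ p, ‖p.1 - p.2‖ ^ 2 ∂π }.Nonempty := by
      refine ⟨∫ p, ‖p.1 - p.2‖ ^ 2 ∂(μ.prod ρ), μ.prod ρ, ?_, ?_, rfl⟩
      · rw [Measure.map_fst_prod]; simp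
      · rw [Measure.map_snd_prod]; simp
    unfold W2sq
    set Sc := { r : ℝ | ∃ π : Measure ((Esp d) × (Esp d)),
        π.map Prod.fst = μ ∧ π.map Prod.snd = ρ ∧ r = ∫ p, ‖p.1 - p.2‖ ^ 2 ∂π }
    have hblow : ((∫ x, a * g x ∂μ) - ∫ x, ψ x ∂ρ) / (a / 2) ≤ sInf Sc := by
      apply le_csInf hne2
      intro r hr
      rw [div_le_iff₀ (by positivity)]
      have := key r hr
      nlinarith
    rw [div_le_iff₀ (by positivity : (0:ℝ) < a / 2)] at hblow
    nlinarith
  -- UPPER BOUND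
  have hub : ∀ ε : ℝ, 0 < ε →
      sInf { v : ℝ | ∃ ρ : Measure (Esp d),
        IsProbabilityMeasure ρ ∧ ρ Ωᶜ = 0 ∧
        v = (∫ x, φ x ∂ρ) + a / 2 * W2sq μ ρ } ≤ (∫ x, a * g x ∂μ) + ε := by
    intro ε hε
    have hεa : 0 < ε / a := div_pos hε ha
    have hexists : ∀ x : (Esp d), ∃ n, G x ((u n : (Esp d))) < g x + ε / a := by
      intro x
      apply exists_lt_of_ciInf_lt
      rw [← hgdense x]
      linarith
    set T : (Esp d) → (Esp d) := fun x => ((u (Nat.find (hexists x)) : (Esp d))) with hTdef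
    have hTspec : ∀ x, G x (T x) < g x + ε / a := fun x => Nat.find_spec (hexists x)
    have hTΩ : ∀ x, T x ∈ Ω := fun x => (u _).2
    have hTmeas : Measurable T :=
      Measurable.find (f := fun n (_ : (Esp d)) => ((u n : (Esp d))))
        (fun n => measurable_const)
        (fun n => measurableSet_lt (hFmeas n) (hgmeas.add_const _)) hexists
    set ρ₀ : Measure (Esp d) := μ.map T with hρ₀def
    haveI hρ₀P : IsProbabilityMeasure ρ₀ := Measure.isProbabilityMeasure_map hTmeas.aemeasurable
    have hρ₀Ω : ρ₀ Ωᶜ = 0 := by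
      rw [hρ₀def, Measure.map_apply hTmeas hΩmeas.compl]
      have : T ⁻¹' Ωᶜ = ∅ := by
        ext x; simp [hTΩ x]
      rw [this]; exact measure_empty
    have hρ₀ae : ∀ᵐ y ∂ρ₀, y ∈ Ω := by
      rw [MeasureTheory.ae_iff]; simpa [Set.compl_def] using hρ₀Ω
    -- the value for ρ₀ is in the set
    have hmem : (∫ x, φ x ∂ρ₀) + a / 2 * W2sq μ ρ₀ ∈
        { v : ℝ | ∃ ρ : Measure (Esp d), IsProbabilityMeasure ρ ∧ ρ Ωᶜ = 0 ∧
          v = (∫ x, φ x ∂ρ) + a / 2 * W2sq μ ρ } := ⟨ρ₀, hρ₀P, hρ₀Ω, rfl⟩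
    have hbdd : BddBelow { v : ℝ | ∃ ρ : Measure (Esp d),
        IsProbabilityMeasure ρ ∧ ρ Ωᶜ = 0 ∧
        v = (∫ x, φ x ∂ρ) + a / 2 * W2sq μ ρ } := ⟨∫ x, a * g x ∂μ, hlow⟩
    refine le_trans (csInf_le hbdd hmem) ?_
    -- now bound the value of ρ₀
    have hφψρ₀ : (∫ x, φ x ∂ρ₀) = ∫ x, ψ (T x) ∂μ := by
      have h1 : (∫ x, φ x ∂ρ₀) = ∫ x, ψ x ∂ρ₀ := by
        apply integral_congr_ae
        filter_upwards [hρ₀ae] with y hy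
        exact hψeq hy
      rw [h1, hρ₀def, integral_map hTmeas.aemeasurable hψcont.aestronglyMeasurable]
    -- W2sq bound via the coupling (id, T)
    have hW : W2sq μ ρ₀ ≤ ∫ x, ‖x - T x‖ ^ 2 ∂μ := by
      unfold W2sq
      apply csInf_le
      · refine ⟨0, ?_⟩
        rintro r ⟨π, hπ1, hπ2, rfl⟩
        exact integral_nonneg fun p => by positivity
      · have hpair : Measurable fun x : (Esp d) => (x, T x) := measurable_id.prodMk hTmeas
        refine ⟨μ.map (fun x => (x, T x)), ?_, ?_, ?_⟩
        · rw [Measure.map_map measurable_fst hpair]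
          have hcomp1 : (Prod.fst ∘ fun x : (Esp d) => (x, T x)) = id := rfl
          rw [hcomp1, Measure.map_id]
        · rw [Measure.map_map measurable_snd hpair]
          have hcomp2 : (Prod.snd ∘ fun x : (Esp d) => (x, T x)) = T := rfl
          rw [hcomp2]
        · rw [integral_map (f := fun p : (Esp d) × (Esp d) => ‖p.1 - p.2‖ ^ 2) hpair.aemeasurable
            ((continuous_fst.sub continuous_snd).norm.pow 2).aestronglyMeasurable]
    -- integrability over μ
    have hintψT : Integrable (fun x => ψ (T x)) μ := by
      refine ⟨(hψcont.measurable.comp hTmeas).aestronglyMeasurable, ?_⟩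
      apply HasFiniteIntegral.of_bounded (C := Cψ)
      filter_upwards with x
      exact hCψ _ (hTΩ x)
    have hintcost : Integrable (fun x => ‖x - T x‖ ^ 2) μ := by
      refine ⟨((continuous_id.measurable.sub hTmeas).norm.pow_const 2).aestronglyMeasurable, ?_⟩
      apply HasFiniteIntegral.of_bounded (C := (2 * R) ^ 2)
      filter_upwards [hμae] with x hx
      have h1 : ‖x - T x‖ ≤ 2 * R := by
        calc ‖x - T x‖ ≤ ‖x‖ + ‖T x‖ := norm_sub_le _ _
          _ ≤ R + R := add_le_add (hR _ hx) (hR _ (hTΩ x))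
          _ = 2 * R := by ring
      rw [Real.norm_eq_abs, abs_of_nonneg (by positivity)]
      have := norm_nonneg (x - T x); nlinarith
    have hstep : (∫ x, φ x ∂ρ₀) + a / 2 * W2sq μ ρ₀ ≤
        ∫ x, (ψ (T x) + a / 2 * ‖x - T x‖ ^ 2) ∂μ := by
      rw [integral_add hintψT (hintcost.const_mul (a / 2)), integral_const_mul, hφψρ₀]
      have := mul_le_mul_of_nonneg_left hW (by positivity : (0:ℝ) ≤ a / 2)
      linarith
    refine le_trans hstep ?_
    have hfinal : (∫ x, (ψ (T x) + a / 2 * ‖x - T x‖ ^ 2) ∂μ) ≤ ∫ x, (a * g x + ε) ∂μ := by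
      apply integral_mono (hintψT.add (hintcost.const_mul (a / 2)))
        (hagint.add (integrable_const ε))
      intro x
      have h1 : G x (T x) < g x + ε / a := hTspec x
      have h2 : a * G x (T x) ≤ a * (g x + ε / a) := mul_le_mul_of_nonneg_left h1.le ha.le
      have h3 : a * G x (T x) = ψ (T x) + a / 2 * ‖x - T x‖ ^ 2 := by
        simp only [hGdef]
        field_simp
        ring
      have h4 : a * (g x + ε / a) = a * g x + ε := by
        field_simp
      simp only [Pi.add_apply]
      rw [← h3]
      calc a * G x (T x) ≤ a * (g x + ε / a) := h2
        _ = a * g x + ε := h4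
    refine le_trans hfinal ?_
    rw [integral_add hagint (integrable_const ε), integral_const]
    simp
  -- conclude
  apply le_antisymm
  · apply le_of_forall_pos_le_add
    intro ε hε
    exact hub ε hε
  · apply le_csInf
    · obtain ⟨y₀, hy₀⟩ := hne
      exact ⟨_, Measure.dirac y₀, by infer_instance, by
        rw [Measure.dirac_apply' _ hΩmeas.compl]
        simp [hy₀], rfl⟩
    · exact hlow
end

section
/- Lower bound part of strong duality for the Wasserstein barycenter: for absolutely continuous μ₁,…,μ_m on convex compact Ω, inf_{ρ ∈ P₂(Ω)} ∑_{i=1}^m (α_i/2) W₂²(μ_i, ρ) ≥ sup over continuous f₁,…,f_{m−1} of ∑_{i=1}^{m−1} α_i ∫ f_i^c dμ_i + α_m ∫ (−∑_{i=1}^{m−1} (α_i/α_m) f_i)^c dμ_m. -/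
open MeasureTheory
open scoped BigOperators

/-- The dual barycenter functional, with the first `n = m−1` potentials indexed by `Fin n`. -/
noncomputable def Dfun {d n : ℕ} (Ω : Set (EuclideanSpace ℝ (Fin d)))
    (α : Fin n → ℝ) (αm : ℝ)
    (μ : Fin n → Measure (EuclideanSpace ℝ (Fin d)))
    (μm : Measure (EuclideanSpace ℝ (Fin d)))
    (f : Fin n → EuclideanSpace ℝ (Fin d) → ℝ) : ℝ :=
  (∑ i, α i * ∫ x, ctrans Ω (f i) x ∂(μ i)) +
    αm * ∫ x, ctrans Ω (fun y => -∑ i, (α i / αm) * f i y) x ∂μm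

variable {d : ℕ}

local notation "E" => EuclideanSpace ℝ (Fin d)

lemma bdd_range {Ω : Set (EuclideanSpace ℝ (Fin d))} {f : E → ℝ} {M : ℝ}
    (hM : ∀ y ∈ Ω, |f y| ≤ M) (x : E) :
    BddBelow (Set.range fun y : Ω => ‖x - (y : E)‖ ^ 2 / 2 - f y) := by
  refine ⟨-M, ?_⟩
  rintro r ⟨y, rfl⟩
  have h := (abs_le.mp (hM y y.2)).2
  nlinarith [sq_nonneg ‖x - (y : E)‖]

lemma ctrans_le {Ω : Set (EuclideanSpace ℝ (Fin d))} {f : E → ℝ} {M : ℝ}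
    (hM : ∀ y ∈ Ω, |f y| ≤ M) (x : E) {y : E} (hy : y ∈ Ω) :
    ctrans Ω f x ≤ ‖x - y‖ ^ 2 / 2 - f y :=
  ciInf_le (bdd_range hM x) ⟨y, hy⟩

lemma ctrans_diff_le {Ω : Set (EuclideanSpace ℝ (Fin d))} {f : E → ℝ} {C M : ℝ}
    (hne : Ω.Nonempty) (hC : ∀ y ∈ Ω, ‖y‖ ≤ C) (hM : ∀ y ∈ Ω, |f y| ≤ M) (x x' : E) :
    ctrans Ω f x - ctrans Ω f x' ≤ ‖x - x'‖ * (‖x'‖ + C) + ‖x - x'‖ ^ 2 / 2 := by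
  haveI := hne.to_subtype
  have key : ctrans Ω f x - (‖x - x'‖ * (‖x'‖ + C) + ‖x - x'‖ ^ 2 / 2) ≤ ctrans Ω f x' := by
    apply le_ciInf
    intro y
    have h1 : ctrans Ω f x ≤ ‖x - (y : E)‖ ^ 2 / 2 - f y := ctrans_le hM x y.2
    have h2 : ‖x - (y : E)‖ ≤ ‖x - x'‖ + ‖x' - (y : E)‖ := norm_sub_le_norm_sub_add_norm_sub x x' y
    have h3 : ‖x' - (y : E)‖ ≤ ‖x'‖ + C := by
      calc ‖x' - (y : E)‖ ≤ ‖x'‖ + ‖(y : E)‖ := norm_sub_le _ _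
        _ ≤ ‖x'‖ + C := by linarith [hC y y.2]
    nlinarith [norm_nonneg (x - x'), norm_nonneg (x' - (y : E)), norm_nonneg (x - (y : E)),
      sq_nonneg (‖x - x'‖ + ‖x' - (y:E)‖ - ‖x - (y:E)‖)]
  linarith

lemma ctrans_continuous {Ω : Set (EuclideanSpace ℝ (Fin d))} {f : E → ℝ} {C M : ℝ}
    (hne : Ω.Nonempty) (hC : ∀ y ∈ Ω, ‖y‖ ≤ C) (hM : ∀ y ∈ Ω, |f y| ≤ M) :
    Continuous (ctrans Ω f) := by
  rw [continuous_iff_continuousAt]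
  intro x₀
  have key : ∀ x : E, |ctrans Ω f x - ctrans Ω f x₀| ≤
      ‖x - x₀‖ * (‖x‖ + ‖x₀‖ + 2 * C) + ‖x - x₀‖ ^ 2 := by
    intro x
    have h1 := ctrans_diff_le hne hC hM x x₀
    have h2 := ctrans_diff_le hne hC hM x₀ x
    have hn : ‖x₀ - x‖ = ‖x - x₀‖ := norm_sub_rev _ _
    rw [hn] at h2
    obtain ⟨y₀, hy₀⟩ := hne
    have hC0 : 0 ≤ C := le_trans (norm_nonneg y₀) (hC y₀ hy₀)
    rw [abs_le]
    constructor
    · nlinarith [mul_nonneg (norm_nonneg (x - x₀)) (add_nonneg (norm_nonneg x₀) hC0),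
        sq_nonneg ‖x - x₀‖, mul_nonneg (norm_nonneg (x - x₀)) (norm_nonneg x)]
    · nlinarith [mul_nonneg (norm_nonneg (x - x₀)) (add_nonneg (norm_nonneg x) hC0),
        sq_nonneg ‖x - x₀‖, mul_nonneg (norm_nonneg (x - x₀)) (norm_nonneg x₀)]
  have hg : Filter.Tendsto (fun x : E => ‖x - x₀‖ * (‖x‖ + ‖x₀‖ + 2 * C) + ‖x - x₀‖ ^ 2)
      (nhds x₀) (nhds 0) := by
    have hc : Continuous fun x : E => ‖x - x₀‖ * (‖x‖ + ‖x₀‖ + 2 * C) + ‖x - x₀‖ ^ 2 := by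
      continuity
    have := hc.tendsto x₀
    simpa using this
  have h0 : Filter.Tendsto (fun x : E => ctrans Ω f x - ctrans Ω f x₀) (nhds x₀) (nhds 0) :=
    squeeze_zero_norm (fun x => by simpa using key x) hg
  have := h0.add_const (ctrans Ω f x₀)
  simpa [ContinuousAt] using this

lemma ctrans_abs_le {Ω : Set (EuclideanSpace ℝ (Fin d))} {f : E → ℝ} {C M : ℝ}
    (hne : Ω.Nonempty) (hC : ∀ y ∈ Ω, ‖y‖ ≤ C) (hM : ∀ y ∈ Ω, |f y| ≤ M)
    {x : E} (hx : x ∈ Ω) : |ctrans Ω f x| ≤ 2 * C ^ 2 + M := by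
  haveI := hne.to_subtype
  obtain ⟨y₀, hy₀⟩ := hne
  have hub : ctrans Ω f x ≤ ‖x - y₀‖ ^ 2 / 2 - f y₀ := ctrans_le hM x hy₀
  have hxy : ‖x - y₀‖ ≤ 2 * C := by
    calc ‖x - y₀‖ ≤ ‖x‖ + ‖y₀‖ := norm_sub_le _ _
      _ ≤ 2 * C := by linarith [hC x hx, hC y₀ hy₀]
  have hfy := abs_le.mp (hM y₀ hy₀)
  have hlb : -M ≤ ctrans Ω f x := by
    apply le_ciInf
    intro y
    have := (abs_le.mp (hM y y.2)).2
    nlinarith [sq_nonneg ‖x - (y : E)‖]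
  rw [abs_le]
  have hC0 : 0 ≤ C := le_trans (norm_nonneg y₀) (hC y₀ hy₀)
  have hM0 : 0 ≤ M := le_trans (abs_nonneg _) (hM y₀ hy₀)
  constructor
  · nlinarith
  · nlinarith [norm_nonneg (x - y₀)]

lemma aesm_of_continuousOn {Ω : Set (EuclideanSpace ℝ (Fin d))} {f : E → ℝ}
    {ρ : Measure E} (hρΩ : ρ Ωᶜ = 0) (hΩ : MeasurableSet Ω) (hf : ContinuousOn f Ω) :
    AEStronglyMeasurable f ρ := by
  have hres : ρ.restrict Ω = ρ := by
    apply Measure.restrict_eq_self_of_ae_mem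
    rw [MeasureTheory.ae_iff]
    exact hρΩ
  have h : AEStronglyMeasurable f (ρ.restrict Ω) := (hf.aemeasurable hΩ).aestronglyMeasurable
  rwa [hres] at h

lemma coupling_bound {Ω : Set (EuclideanSpace ℝ (Fin d))}
    (hcomp : IsCompact Ω) (hne : Ω.Nonempty)
    {μ ρ : Measure E} [IsProbabilityMeasure μ] [IsProbabilityMeasure ρ]
    (hμΩ : μ Ωᶜ = 0) (hρΩ : ρ Ωᶜ = 0)
    {f : E → ℝ} (hf : ContinuousOn f Ω) :
    2 * ((∫ x, ctrans Ω f x ∂μ) + ∫ x, f x ∂ρ) ≤ W2sq μ ρ := by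
  obtain ⟨C, hC⟩ := hcomp.exists_bound_of_continuousOn continuousOn_id
  simp only [id] at hC
  obtain ⟨M, hM⟩ := hcomp.exists_bound_of_continuousOn hf
  simp only [Real.norm_eq_abs] at hM
  have hΩm : MeasurableSet Ω := hcomp.isClosed.measurableSet
  obtain ⟨y₀, hy₀⟩ := id hne
  have hC0 : 0 ≤ C := le_trans (norm_nonneg y₀) (hC y₀ hy₀)
  have hctc : Continuous (ctrans Ω f) := ctrans_continuous hne hC hM
  apply le_csInf
  · exact ⟨_, μ.prod ρ, by simp, by simp, rfl⟩
  rintro r ⟨π, hfst, hsnd, rfl⟩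
  -- π is a probability measure
  have hπuniv : π Set.univ = 1 := by
    have : π.map Prod.fst Set.univ = 1 := by rw [hfst]; simp
    rwa [Measure.map_apply measurable_fst MeasurableSet.univ, Set.preimage_univ] at this
  haveI : IsProbabilityMeasure π := ⟨hπuniv⟩
  -- a.e. concentration on Ω ×ˢ Ω
  have h1 : π (Prod.fst ⁻¹' Ωᶜ) = 0 := by
    rw [← Measure.map_apply measurable_fst hΩm.compl, hfst]; exact hμΩ
  have h2 : π (Prod.snd ⁻¹' Ωᶜ) = 0 := by
    rw [← Measure.map_apply measurable_snd hΩm.compl, hsnd]; exact hρΩ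
  have hae : ∀ᵐ p ∂π, p.1 ∈ Ω ∧ p.2 ∈ Ω := by
    rw [MeasureTheory.ae_iff]
    refine measure_mono_null ?_ (measure_union_null h1 h2)
    intro p hp
    simp only [Set.mem_setOf_eq, not_and_or] at hp
    rcases hp with h | h
    · exact Or.inl h
    · exact Or.inr h
  -- integrability of the cost
  have hcostm : AEStronglyMeasurable (fun p : E × E => ‖p.1 - p.2‖ ^ 2) π :=
    (Continuous.aestronglyMeasurable (by continuity))
  have hcost_int : Integrable (fun p : E × E => ‖p.1 - p.2‖ ^ 2) π := by
    refine (integrable_const ((2 * C) ^ 2)).mono' hcostm ?_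
    filter_upwards [hae] with p hp
    have : ‖p.1 - p.2‖ ≤ 2 * C := by
      calc ‖p.1 - p.2‖ ≤ ‖p.1‖ + ‖p.2‖ := norm_sub_le _ _
        _ ≤ 2 * C := by linarith [hC p.1 hp.1, hC p.2 hp.2]
    rw [Real.norm_eq_abs, abs_of_nonneg (by positivity)]
    nlinarith [norm_nonneg (p.1 - p.2)]
  -- integrability of the potentials
  have hG1m : AEStronglyMeasurable (fun p : E × E => ctrans Ω f p.1) π :=
    (hctc.comp continuous_fst).aestronglyMeasurable
  have hG1_int : Integrable (fun p : E × E => ctrans Ω f p.1) π := by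
    refine (integrable_const (2 * C ^ 2 + M)).mono' hG1m ?_
    filter_upwards [hae] with p hp
    rw [Real.norm_eq_abs]
    exact ctrans_abs_le ⟨y₀, hy₀⟩ hC hM hp.1
  have hG2m : AEStronglyMeasurable (fun p : E × E => f p.2) π := by
    have hres : π.restrict (Set.univ ×ˢ Ω) = π := by
      apply Measure.restrict_eq_self_of_ae_mem
      filter_upwards [hae] with p hp
      exact ⟨trivial, hp.2⟩
    have hcont : ContinuousOn (fun p : E × E => f p.2) (Set.univ ×ˢ Ω) :=
      hf.comp continuous_snd.continuousOn (fun p hp => hp.2)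
    have h : AEStronglyMeasurable (fun p : E × E => f p.2) (π.restrict (Set.univ ×ˢ Ω)) :=
      (hcont.aemeasurable (MeasurableSet.univ.prod hΩm)).aestronglyMeasurable
    rwa [hres] at h
  have hG2_int : Integrable (fun p : E × E => f p.2) π := by
    refine (integrable_const M).mono' hG2m ?_
    filter_upwards [hae] with p hp
    rw [Real.norm_eq_abs]
    exact hM _ hp.2
  -- pointwise inequality
  have hpt : ∀ᵐ p ∂π, 2 * (ctrans Ω f p.1 + f p.2) ≤ ‖p.1 - p.2‖ ^ 2 := by
    filter_upwards [hae] with p hp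
    have := ctrans_le hM p.1 hp.2
    linarith
  -- integrate
  have hint : ∫ p, 2 * (ctrans Ω f p.1 + f p.2) ∂π ≤ ∫ p, ‖p.1 - p.2‖ ^ 2 ∂π :=
    integral_mono_ae (by exact ((hG1_int.add hG2_int).const_mul 2)) hcost_int hpt
  -- identify the left side with the marginals
  have hmarg1 : ∫ x, ctrans Ω f x ∂μ = ∫ p, ctrans Ω f p.1 ∂π := by
    rw [← hfst, integral_map measurable_fst.aemeasurable]
    exact hctc.aestronglyMeasurable
  have hmarg2 : ∫ x, f x ∂ρ = ∫ p, f p.2 ∂π := by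
    rw [← hsnd, integral_map measurable_snd.aemeasurable]
    rw [hsnd]
    exact aesm_of_continuousOn hρΩ hΩm hf
  calc 2 * ((∫ x, ctrans Ω f x ∂μ) + ∫ x, f x ∂ρ)
      = ∫ p, 2 * (ctrans Ω f p.1 + f p.2) ∂π := by
        rw [hmarg1, hmarg2, integral_const_mul, integral_add hG1_int hG2_int]
    _ ≤ ∫ p, ‖p.1 - p.2‖ ^ 2 ∂π := hint


/-- Lower bound part of strong duality: the infimum of the barycenter functional dominates
the dual value `D(f₁,…,f_{m−1})` for every tuple of continuous potentials. -/
theorem barycenter_weak_duality {d n : ℕ} (Ω : Set (EuclideanSpace ℝ (Fin d)))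
    (hconv : Convex ℝ Ω) (hcomp : IsCompact Ω) (hne : Ω.Nonempty)
    (α : Fin n → ℝ) (αm : ℝ) (hα : ∀ i, 0 < α i) (hαm : 0 < αm)
    (hsum : (∑ i, α i) + αm = 1)
    (μ : Fin n → Measure (EuclideanSpace ℝ (Fin d)))
    (μm : Measure (EuclideanSpace ℝ (Fin d)))
    (hμ : ∀ i, IsProbabilityMeasure (μ i)) (hμm : IsProbabilityMeasure μm)
    (hμΩ : ∀ i, μ i Ωᶜ = 0) (hμmΩ : μm Ωᶜ = 0)
    (hac : ∀ i, μ i ≪ volume) (hacm : μm ≪ volume)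
    (f : Fin n → EuclideanSpace ℝ (Fin d) → ℝ)
    (hf : ∀ i, ContinuousOn (f i) Ω) :
    sInf { B : ℝ | ∃ ρ : Measure (EuclideanSpace ℝ (Fin d)),
        IsProbabilityMeasure ρ ∧ ρ Ωᶜ = 0 ∧
        B = (∑ i, α i / 2 * W2sq (μ i) ρ) + αm / 2 * W2sq μm ρ } ≥
      Dfun Ω α αm μ μm f := by
    classical
  haveI := hμm
  have hΩm : MeasurableSet Ω := hcomp.isClosed.measurableSet
  obtain ⟨g, hg⟩ : ∃ g : EuclideanSpace ℝ (Fin d) → ℝ, g = fun y => -∑ i, (α i / αm) * f i y := ⟨_, rfl⟩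
  have hgc : ContinuousOn g Ω := by
    rw [hg]
    apply ContinuousOn.neg
    apply continuousOn_finset_sum
    intro i _
    exact continuousOn_const.mul (hf i)
  apply le_csInf
  · exact ⟨_, μm, hμm, hμmΩ, rfl⟩
  rintro B ⟨ρ, hρ, hρΩ, rfl⟩
  haveI := hρ
  have key : ∀ i, 2 * ((∫ x, ctrans Ω (f i) x ∂(μ i)) + ∫ x, f i x ∂ρ) ≤ W2sq (μ i) ρ := by
    intro i
    haveI := hμ i
    exact coupling_bound hcomp hne (hμΩ i) hρΩ (hf i)
  have keym : 2 * ((∫ x, ctrans Ω g x ∂μm) + ∫ x, g x ∂ρ) ≤ W2sq μm ρ :=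
    coupling_bound hcomp hne hμmΩ hρΩ hgc
  have haeρ : ∀ᵐ x ∂ρ, x ∈ Ω := by
    rw [MeasureTheory.ae_iff]
    exact hρΩ
  have hint : ∀ i, Integrable (f i) ρ := by
    intro i
    obtain ⟨M, hM⟩ := hcomp.exists_bound_of_continuousOn (hf i)
    refine (integrable_const M).mono' (aesm_of_continuousOn hρΩ hΩm (hf i)) ?_
    filter_upwards [haeρ] with x hx
    exact hM x hx
  -- cancellation
  have hcancel : (∑ i, α i * ∫ x, f i x ∂ρ) + αm * ∫ x, g x ∂ρ = 0 := by
    have h1 : αm * ∫ x, g x ∂ρ = ∫ x, αm * g x ∂ρ := (integral_const_mul _ _).symm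
    have h2 : (fun x => αm * g x) = fun x => ∑ i, -(α i * f i x) := by
      funext x
      rw [hg]
      simp only [mul_neg, Finset.mul_sum, ← Finset.sum_neg_distrib]
      apply Finset.sum_congr rfl
      intro i _
      field_simp
    have h3 : ∫ x, (∑ i, -(α i * f i x)) ∂ρ = ∑ i, -(α i * ∫ x, f i x ∂ρ) := by
      rw [integral_finset_sum]
      · apply Finset.sum_congr rfl
        intro i _
        rw [integral_neg, integral_const_mul]
      · intro i _
        exact ((hint i).const_mul _).neg
    rw [h1, h2, h3, Finset.sum_neg_distrib]
    ring
  -- per-term bounds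
  have step : ∀ i, α i * ((∫ x, ctrans Ω (f i) x ∂(μ i)) + ∫ x, f i x ∂ρ) ≤
      α i / 2 * W2sq (μ i) ρ := by
    intro i
    have h := mul_le_mul_of_nonneg_left (key i) (by linarith [hα i] : (0:ℝ) ≤ α i / 2)
    calc α i * ((∫ x, ctrans Ω (f i) x ∂(μ i)) + ∫ x, f i x ∂ρ)
        = α i / 2 * (2 * ((∫ x, ctrans Ω (f i) x ∂(μ i)) + ∫ x, f i x ∂ρ)) := by ring
      _ ≤ α i / 2 * W2sq (μ i) ρ := h
  have stepm : αm * ((∫ x, ctrans Ω g x ∂μm) + ∫ x, g x ∂ρ) ≤ αm / 2 * W2sq μm ρ := by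
    have h := mul_le_mul_of_nonneg_left keym (by linarith : (0:ℝ) ≤ αm / 2)
    calc αm * ((∫ x, ctrans Ω g x ∂μm) + ∫ x, g x ∂ρ)
        = αm / 2 * (2 * ((∫ x, ctrans Ω g x ∂μm) + ∫ x, g x ∂ρ)) := by ring
      _ ≤ αm / 2 * W2sq μm ρ := h
  have hsumle : ∑ i, α i * ((∫ x, ctrans Ω (f i) x ∂(μ i)) + ∫ x, f i x ∂ρ) ≤
      ∑ i, α i / 2 * W2sq (μ i) ρ := Finset.sum_le_sum fun i _ => step i
  have expand : ∑ i, α i * ((∫ x, ctrans Ω (f i) x ∂(μ i)) + ∫ x, f i x ∂ρ)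
      = (∑ i, α i * ∫ x, ctrans Ω (f i) x ∂(μ i)) + ∑ i, α i * ∫ x, f i x ∂ρ := by
    rw [← Finset.sum_add_distrib]
    apply Finset.sum_congr rfl
    intro i _
    ring
  show Dfun Ω α αm μ μm f ≤ _
  have hD : Dfun Ω α αm μ μm f =
      (∑ i, α i * ∫ x, ctrans Ω (f i) x ∂(μ i)) + αm * ∫ x, ctrans Ω g x ∂μm := by
    rw [hg]; rfl
  rw [hD]
  have := hsumle
  nlinarith [hsumle, stepm, hcancel, expand]
end

section
/- Derivative of the c-transform under perturbation: let Ω ⊂ ℝ^d be convex compact, f, h continuous on Ω, and suppose f^c is differentiable at x ∈ interior(Ω) with the infimum in f^c(x) attained at a unique point T_{f^c}(x) = x − ∇f^c(x). Then lim_{ε→0} [(f + εh)^c(x) − f^c(x)]/ε = −h(T_{f^c}(x)). -/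
open Filter

/-- Derivative of the c-transform under perturbation: if `f^c` is differentiable at `x`
with the infimum attained uniquely at `T_{f^c}(x) = x − ∇f^c(x)`, then
`lim_{ε→0} [(f+εh)^c(x) − f^c(x)]/ε = −h(T_{f^c}(x))`. -/
theorem ctransform_perturbation_derivative {d : ℕ}
    (Ω : Set (EuclideanSpace ℝ (Fin d)))
    (hconv : Convex ℝ Ω) (hcomp : IsCompact Ω)
    (f h : EuclideanSpace ℝ (Fin d) → ℝ)
    (hf : ContinuousOn f Ω) (hh : ContinuousOn h Ω)
    (x : EuclideanSpace ℝ (Fin d)) (hx : x ∈ interior Ω)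
    (hdiff : DifferentiableAt ℝ (ctrans Ω f) x)
    (hmem : x - gradient (ctrans Ω f) x ∈ Ω)
    (hattain : ctrans Ω f x =
      ‖x - (x - gradient (ctrans Ω f) x)‖ ^ 2 / 2 - f (x - gradient (ctrans Ω f) x))
    (huniq : ∀ y ∈ Ω, ctrans Ω f x = ‖x - y‖ ^ 2 / 2 - f y →
      y = x - gradient (ctrans Ω f) x) :
    Tendsto (fun ε : ℝ =>
        (ctrans Ω (fun y => f y + ε * h y) x - ctrans Ω f x) / ε)
      (nhdsWithin 0 {0}ᶜ)
      (nhds (-h (x - gradient (ctrans Ω f) x))) := by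
  classical
  set T := x - gradient (ctrans Ω f) x with hTdef
  have hne : Ω.Nonempty := ⟨T, hmem⟩
  have hneS : Nonempty ↥Ω := hne.to_subtype
  -- general attainment lemma for continuous perturbed potentials
  have hgen : ∀ φ : EuclideanSpace ℝ (Fin d) → ℝ, ContinuousOn φ Ω →
      ∃ z ∈ Ω, (∀ y ∈ Ω, ‖x - z‖ ^ 2 / 2 - φ z ≤ ‖x - y‖ ^ 2 / 2 - φ y) ∧
        ctrans Ω φ x = ‖x - z‖ ^ 2 / 2 - φ z := by
    intro φ hφ
    have hG : ContinuousOn (fun y : EuclideanSpace ℝ (Fin d) =>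
        ‖x - y‖ ^ 2 / 2 - φ y) Ω :=
      ((((continuous_const.sub continuous_id).norm.pow 2).div_const 2).continuousOn).sub hφ
    obtain ⟨z, hz, hzmin⟩ := hcomp.exists_isMinOn hne hG
    refine ⟨z, hz, fun y hy => hzmin hy, le_antisymm ?_ ?_⟩
    · refine ciInf_le ⟨‖x - z‖ ^ 2 / 2 - φ z, ?_⟩ (⟨z, hz⟩ : Ω)
      rintro v ⟨y, rfl⟩
      exact hzmin y.2
    · exact le_ciInf fun y => hzmin y.2
  obtain ⟨z0, hz0, hz0min, hz0eq⟩ := hgen f hf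
  have hcle : ∀ y ∈ Ω, ctrans Ω f x ≤ ‖x - y‖ ^ 2 / 2 - f y := by
    intro y hy; rw [hz0eq]; exact hz0min y hy
  have hsel : ∀ ε : ℝ, ∃ z ∈ Ω,
      (∀ y ∈ Ω, ‖x - z‖ ^ 2 / 2 - (f z + ε * h z) ≤ ‖x - y‖ ^ 2 / 2 - (f y + ε * h y)) ∧
      ctrans Ω (fun y => f y + ε * h y) x = ‖x - z‖ ^ 2 / 2 - (f z + ε * h z) :=
    fun ε => hgen _ (hf.add (continuousOn_const.mul hh))
  choose Y hYmem hYmin hYeq using hsel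
  obtain ⟨M, hM⟩ := hcomp.exists_bound_of_continuousOn hh
  have hM' : ∀ y ∈ Ω, |h y| ≤ M := by
    intro y hy; simpa [Real.norm_eq_abs] using hM y hy
  have hM0 : 0 ≤ M := le_trans (abs_nonneg _) (hM' T hmem)
  -- upper bound
  have hub : ∀ ε : ℝ, ctrans Ω (fun y => f y + ε * h y) x ≤ ctrans Ω f x - ε * h T := by
    intro ε
    calc ctrans Ω (fun y => f y + ε * h y) x
        = ‖x - Y ε‖ ^ 2 / 2 - (f (Y ε) + ε * h (Y ε)) := hYeq ε
      _ ≤ ‖x - T‖ ^ 2 / 2 - (f T + ε * h T) := hYmin ε T hmem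
      _ = ctrans Ω f x - ε * h T := by rw [hattain]; ring
  -- lower bound
  have hlb : ∀ ε : ℝ, ctrans Ω f x - ε * h (Y ε) ≤ ctrans Ω (fun y => f y + ε * h y) x := by
    intro ε
    rw [hYeq ε]
    have := hcle (Y ε) (hYmem ε)
    linarith
  -- key bound on the difference quotient
  have key : ∀ ε : ℝ, ε ≠ 0 →
      |(ctrans Ω (fun y => f y + ε * h y) x - ctrans Ω f x) / ε + h T|
        ≤ |h T - h (Y ε)| := by
    intro ε hε
    have h1 := hub ε
    have h2 := hlb ε
    have habs : |ctrans Ω (fun y => f y + ε * h y) x - ctrans Ω f x + ε * h T|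
        ≤ |ε| * |h T - h (Y ε)| := by
      rw [abs_le]
      have hmul : ε * (h T - h (Y ε)) = ε * h T - ε * h (Y ε) := by ring
      have hna := neg_abs_le (ε * (h T - h (Y ε)))
      have hla := le_abs_self (ε * (h T - h (Y ε)))
      rw [abs_mul] at hna hla
      constructor
      · linarith
      · have : ctrans Ω (fun y => f y + ε * h y) x - ctrans Ω f x + ε * h T ≤ 0 := by
          linarith
        have hnn : (0:ℝ) ≤ |ε| * |h T - h (Y ε)| :=
          mul_nonneg (abs_nonneg _) (abs_nonneg _)
        linarith
    have heq : (ctrans Ω (fun y => f y + ε * h y) x - ctrans Ω f x) / ε + h T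
        = (ctrans Ω (fun y => f y + ε * h y) x - ctrans Ω f x + ε * h T) / ε := by
      field_simp
    rw [heq, abs_div, div_le_iff₀ (abs_pos.mpr hε)]
    calc |ctrans Ω (fun y => f y + ε * h y) x - ctrans Ω f x + ε * h T|
        ≤ |ε| * |h T - h (Y ε)| := habs
      _ = |h T - h (Y ε)| * |ε| := mul_comm _ _
  -- the minimizers converge to T
  have hYtendsto : Tendsto Y (nhds 0) (nhds T) := by
    rw [Metric.tendsto_nhds_nhds]
    intro δ hδ
    by_cases hK : (Ω \ Metric.ball T δ).Nonempty
    · have hKc : IsCompact (Ω \ Metric.ball T δ) := hcomp.diff Metric.isOpen_ball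
      have hGc : ContinuousOn (fun y : EuclideanSpace ℝ (Fin d) =>
          ‖x - y‖ ^ 2 / 2 - f y) (Ω \ Metric.ball T δ) :=
        (((((continuous_const.sub continuous_id).norm.pow 2).div_const 2).continuousOn).sub
          hf).mono Set.diff_subset
      obtain ⟨z1, hz1K, hz1min⟩ := hKc.exists_isMinOn hK hGc
      have hgz1 : ctrans Ω f x < ‖x - z1‖ ^ 2 / 2 - f z1 := by
        rcases (hcle z1 hz1K.1).lt_or_eq with hlt | heq
        · exact hlt
        · exfalso
          have hz1T : z1 = T := huniq z1 hz1K.1 heq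
          exact hz1K.2 (hz1T ▸ Metric.mem_ball_self hδ)
      set m := ‖x - z1‖ ^ 2 / 2 - f z1 with hm
      set c := ctrans Ω f x with hc
      refine ⟨(m - c) / (2 * M + 1), div_pos (by linarith) (by linarith), ?_⟩
      intro ε hεd
      rw [Real.dist_eq, sub_zero] at hεd
      by_contra hcon
      have hYK : Y ε ∈ Ω \ Metric.ball T δ :=
        ⟨hYmem ε, fun hb => hcon (Metric.mem_ball.mp hb)⟩
      have hgY : m ≤ ‖x - Y ε‖ ^ 2 / 2 - f (Y ε) := hz1min hYK
      -- bounds on ε * h terms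
      have hb1 : |ε * h (Y ε)| ≤ |ε| * M := by
        rw [abs_mul]
        exact mul_le_mul_of_nonneg_left (hM' _ (hYmem ε)) (abs_nonneg ε)
      have hb2 : |ε * h T| ≤ |ε| * M := by
        rw [abs_mul]
        exact mul_le_mul_of_nonneg_left (hM' T hmem) (abs_nonneg ε)
      have hl1 := le_abs_self (ε * h (Y ε))
      have hl2 := neg_abs_le (ε * h T)
      -- ctrans(f+εh) ≥ m - |ε|M and ≤ c + |ε|M
      have hA : m - |ε| * M ≤ ctrans Ω (fun y => f y + ε * h y) x := by
        rw [hYeq ε]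
        linarith
      have hB : ctrans Ω (fun y => f y + ε * h y) x ≤ c + |ε| * M := by
        have := hub ε
        linarith
      have hfin : |ε| * (2 * M + 1) < m - c :=
        (lt_div_iff₀ (by positivity)).mp hεd
      have hεnn : (0:ℝ) ≤ |ε| := abs_nonneg ε
      nlinarith
    · refine ⟨1, one_pos, fun {ε} _ => ?_⟩
      have hsub : Ω ⊆ Metric.ball T δ :=
        Set.diff_eq_empty.mp (Set.not_nonempty_iff_eq_empty.mp hK)
      exact Metric.mem_ball.mp (hsub (hYmem ε))
  -- h ∘ Y converges to h T along the punctured filter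
  have hhY : Tendsto (fun ε => h (Y ε)) (nhdsWithin 0 {0}ᶜ) (nhds (h T)) := by
    have h1 : Tendsto Y (nhdsWithin (0:ℝ) {0}ᶜ) (nhdsWithin T Ω) := by
      apply tendsto_nhdsWithin_of_tendsto_nhds_of_eventually_within
      · exact hYtendsto.mono_left nhdsWithin_le_nhds
      · exact Eventually.of_forall fun ε => hYmem ε
    exact (hh T hmem).tendsto.comp h1
  have hbound0 : Tendsto (fun ε => |h T - h (Y ε)|) (nhdsWithin 0 {0}ᶜ) (nhds 0) := by
    have h2 : Tendsto (fun ε => h T - h (Y ε)) (nhdsWithin 0 {0}ᶜ) (nhds (h T - h T)) :=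
      (tendsto_const_nhds (x := h T)).sub hhY
    have h3 := h2.abs
    simpa using h3
  rw [tendsto_iff_dist_tendsto_zero]
  have hev : ∀ᶠ ε in nhdsWithin (0:ℝ) {0}ᶜ,
      dist ((ctrans Ω (fun y => f y + ε * h y) x - ctrans Ω f x) / ε) (-h T)
        ≤ |h T - h (Y ε)| := by
    filter_upwards [self_mem_nhdsWithin] with ε hε
    have hε0 : ε ≠ 0 := by simpa using hε
    have := key ε hε0
    rw [Real.dist_eq, sub_neg_eq_add]
    exact this
  exact squeeze_zero' (Eventually.of_forall fun ε => dist_nonneg) hev hbound0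
end

section
/- Pushforward value of the dual: let Ω ⊂ ℝ^d be convex compact, μ ∈ P₂(Ω) absolutely continuous, f c-concave with f^c differentiable μ-a.e., and T := id − ∇f^c. Then (1/2) W₂²(μ, T_#μ) = ∫_Ω f^c dμ + ∫_Ω f d[T_#μ]. -/
open MeasureTheory

namespace CtransAux

variable {d : ℕ} {Ω : Set (EuclideanSpace ℝ (Fin d))}

lemma bddBelow_aux {f : EuclideanSpace ℝ (Fin d) → ℝ} {B : ℝ}
    (hfA : ∀ y ∈ Ω, f y ≤ B) (x : EuclideanSpace ℝ (Fin d)) :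
    BddBelow (Set.range fun y : Ω => ‖x - (y : EuclideanSpace ℝ (Fin d))‖ ^ 2 / 2 - f y) := by
  refine ⟨-B, ?_⟩
  rintro r ⟨⟨y, hy⟩, rfl⟩
  have h1 := hfA y hy
  have h0 : (0:ℝ) ≤ ‖x - y‖ ^ 2 / 2 := by positivity
  simp only
  linarith

lemma ctrans_le {f : EuclideanSpace ℝ (Fin d) → ℝ} {B : ℝ}
    (hfA : ∀ y ∈ Ω, f y ≤ B) (x : EuclideanSpace ℝ (Fin d))
    {y : EuclideanSpace ℝ (Fin d)} (hy : y ∈ Ω) :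
    ctrans Ω f x ≤ ‖x - y‖ ^ 2 / 2 - f y :=
  ciInf_le (bddBelow_aux hfA x) ⟨y, hy⟩

lemma le_ctrans (hne : Ω.Nonempty) {f : EuclideanSpace ℝ (Fin d) → ℝ}
    {c : ℝ} {x : EuclideanSpace ℝ (Fin d)}
    (h : ∀ y ∈ Ω, c ≤ ‖x - y‖ ^ 2 / 2 - f y) : c ≤ ctrans Ω f x := by
  have : Nonempty Ω := hne.to_subtype
  exact le_ciInf fun y => h y y.2

lemma ctrans_junk {g : EuclideanSpace ℝ (Fin d) → ℝ}
    (hb : Bornology.IsBounded Ω) (hg : ¬ BddAbove (g '' Ω)) :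
    ctrans Ω g = fun _ => 0 := by
  funext x
  refine Real.iInf_of_not_bddBelow ?_
  rintro ⟨m, hm⟩
  apply hg
  obtain ⟨R, hR⟩ := hb.subset_closedBall 0
  refine ⟨(‖x‖ + R) ^ 2 / 2 - m, ?_⟩
  rintro r ⟨z, hz, rfl⟩
  have hmz : m ≤ ‖x - z‖ ^ 2 / 2 - g z := hm ⟨⟨z, hz⟩, rfl⟩
  have hzR : ‖z‖ ≤ R := mem_closedBall_zero_iff.mp (hR hz)
  have hxz : ‖x - z‖ ≤ ‖x‖ + R := (norm_sub_le x z).trans (by linarith)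
  have h0 : (0:ℝ) ≤ ‖x - z‖ := norm_nonneg _
  nlinarith

lemma ctrans_bound (hne : Ω.Nonempty) (hb : Bornology.IsBounded Ω)
    (g : EuclideanSpace ℝ (Fin d) → ℝ) :
    ∃ C : ℝ, ∀ y ∈ Ω, |ctrans Ω g y| ≤ C := by
  obtain ⟨z₀, hz₀⟩ := hne
  obtain ⟨R, hR⟩ := hb.subset_closedBall 0
  have hR0 : 0 ≤ R := le_trans (norm_nonneg z₀) (mem_closedBall_zero_iff.mp (hR hz₀))
  by_cases hg : BddAbove (g '' Ω)
  · obtain ⟨B, hB⟩ := hg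
    have hgB : ∀ z ∈ Ω, g z ≤ B := fun z hz => hB ⟨z, hz, rfl⟩
    refine ⟨(2*R)^2/2 + |g z₀| + |B|, fun y hy => ?_⟩
    have hB0 : B ≤ |B| := le_abs_self B
    have hg0 : -|g z₀| ≤ g z₀ := neg_abs_le _
    have hg0' : g z₀ ≤ |g z₀| := le_abs_self _
    rw [abs_le]
    constructor
    · have h2 : -((2*R)^2/2 + |g z₀| + |B|) ≤ ctrans Ω g y := by
        refine le_ctrans ⟨z₀, hz₀⟩ (fun z hz => ?_)
        have := hgB z hz
        have h0 : (0:ℝ) ≤ ‖y - z‖ ^ 2 / 2 := by positivity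
        have habs : (0:ℝ) ≤ |g z₀| := abs_nonneg _
        nlinarith [sq_nonneg R]
      exact h2
    · have h1 := ctrans_le hgB y hz₀
      have hyR : ‖y‖ ≤ R := mem_closedBall_zero_iff.mp (hR hy)
      have hzR : ‖z₀‖ ≤ R := mem_closedBall_zero_iff.mp (hR hz₀)
      have hxz : ‖y - z₀‖ ≤ 2*R := (norm_sub_le y z₀).trans (by linarith)
      have h0 : (0:ℝ) ≤ ‖y - z₀‖ := norm_nonneg _
      have habs : (0:ℝ) ≤ |B| := abs_nonneg _
      nlinarith [sq_nonneg (2*R - ‖y - z₀‖)]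
  · have h := ctrans_junk hb hg
    refine ⟨1, fun y _ => ?_⟩
    simp [h]

lemma ctrans_usc (hne : Ω.Nonempty) (hb : Bornology.IsBounded Ω)
    (g : EuclideanSpace ℝ (Fin d) → ℝ) :
    UpperSemicontinuous (ctrans Ω g) := by
  by_cases hg : BddAbove (g '' Ω)
  · obtain ⟨B, hB⟩ := hg
    have hgB : ∀ z ∈ Ω, g z ≤ B := fun z hz => hB ⟨z, hz, rfl⟩
    have : Nonempty Ω := hne.to_subtype
    exact upperSemicontinuous_ciInf (fun x => bddBelow_aux hgB x)
      (fun y => Continuous.upperSemicontinuous (by fun_prop))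
  · rw [ctrans_junk hb hg]
    exact continuous_const.upperSemicontinuous

lemma exists_min_lsc {φ : EuclideanSpace ℝ (Fin d) → ℝ}
    (hcomp : IsCompact Ω) (hne : Ω.Nonempty) (hφ : LowerSemicontinuous φ) :
    ∃ y ∈ Ω, ∀ z ∈ Ω, φ y ≤ φ z := by
  by_contra hcon
  push_neg at hcon
  choose z hzΩ hzlt using hcon
  obtain ⟨t, ht⟩ := hcomp.elim_nhds_subcover'
    (fun y hy => φ ⁻¹' Set.Ioi (φ (z y hy)))
    (fun y hy => hφ y _ (hzlt y hy))
  have htne : t.Nonempty := by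
    obtain ⟨w, hw⟩ := hne
    have := ht hw
    rw [Set.mem_iUnion₂] at this
    obtain ⟨i, hi, -⟩ := this
    exact ⟨i, hi⟩
  obtain ⟨i₀, hi₀t, hmin⟩ := t.exists_min_image (fun i => φ (z i i.2)) htne
  have hz0 : z i₀ i₀.2 ∈ Ω := hzΩ _ _
  have hmem := ht hz0
  rw [Set.mem_iUnion₂] at hmem
  obtain ⟨i₁, hi₁, hmem⟩ := hmem
  exact absurd (hmin i₁ hi₁) (not_le.mpr hmem)

lemma usc_neg_lsc {f : EuclideanSpace ℝ (Fin d) → ℝ} (hf : UpperSemicontinuous f) :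
    LowerSemicontinuous (fun z => -f z) := by
  intro x c hc
  have hc' : c < -f x := hc
  have := hf x (-c) (by linarith)
  filter_upwards [this] with z hz
  linarith

lemma danskin (hcomp : IsCompact Ω) (hne : Ω.Nonempty)
    {f : EuclideanSpace ℝ (Fin d) → ℝ} {B : ℝ} (hfA : ∀ y ∈ Ω, f y ≤ B)
    (hfusc : UpperSemicontinuous f)
    {x : EuclideanSpace ℝ (Fin d)} (hdx : DifferentiableAt ℝ (ctrans Ω f) x) :
    ∃ y ∈ Ω, gradient (ctrans Ω f) x = x - y ∧
      ctrans Ω f x = ‖x - y‖ ^ 2 / 2 - f y := by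
  have hψ : LowerSemicontinuous (fun z : EuclideanSpace ℝ (Fin d) => ‖x - z‖ ^ 2 / 2 - f z) := by
    have h1 : Continuous (fun z : EuclideanSpace ℝ (Fin d) => ‖x - z‖ ^ 2 / 2) := by fun_prop
    have := h1.lowerSemicontinuous.add (usc_neg_lsc hfusc)
    simpa [sub_eq_add_neg] using this
  obtain ⟨y, hyΩ, hymin⟩ := exists_min_lsc hcomp hne hψ
  have hFx : ctrans Ω f x = ‖x - y‖ ^ 2 / 2 - f y :=
    le_antisymm (ctrans_le hfA x hyΩ) (le_ctrans hne hymin)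
  have hid : HasFDerivAt (fun z : EuclideanSpace ℝ (Fin d) => z - y)
      (ContinuousLinearMap.id ℝ (EuclideanSpace ℝ (Fin d))) x := (hasFDerivAt_id x).sub_const y
  have hin := hid.inner ℝ hid
  have h2 := (hin.const_mul (1/2 : ℝ)).sub_const (f y)
  have hfun : (fun z : EuclideanSpace ℝ (Fin d) =>
      (1/2 : ℝ) * (inner ℝ (z - y) (z - y) : ℝ) - f y) = fun z => ‖z - y‖ ^ 2 / 2 - f y := by
    funext z
    rw [real_inner_self_eq_norm_sq]
    ring
  rw [hfun] at h2
  have hder : ((1/2 : ℝ) • ((fderivInnerCLM ℝ (x - y, x - y)).comp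
      ((ContinuousLinearMap.id ℝ (EuclideanSpace ℝ (Fin d))).prod
        (ContinuousLinearMap.id ℝ (EuclideanSpace ℝ (Fin d)))))) =
      (InnerProductSpace.toDual ℝ (EuclideanSpace ℝ (Fin d)) (x - y) :
        EuclideanSpace ℝ (Fin d) →L[ℝ] ℝ) := by
    apply ContinuousLinearMap.ext
    intro v
    simp only [ContinuousLinearMap.smul_apply, ContinuousLinearMap.coe_comp',
      Function.comp_apply, ContinuousLinearMap.prod_apply, ContinuousLinearMap.id_apply,
      fderivInnerCLM_apply, InnerProductSpace.toDual_apply_apply, smul_eq_mul]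
    rw [real_inner_comm v (x - y)]
    ring
  rw [hder] at h2
  have hmin : IsLocalMin (fun z => (‖z - y‖ ^ 2 / 2 - f y) - ctrans Ω f z) x :=
    Filter.Eventually.of_forall (fun z => by
      have hz := ctrans_le hfA z hyΩ
      simp only
      linarith)
  have h0 := hmin.fderiv_eq_zero
  rw [fderiv_fun_sub h2.differentiableAt hdx, h2.fderiv, sub_eq_zero] at h0
  have hgrad : gradient (ctrans Ω f) x = x - y := by
    show (InnerProductSpace.toDual ℝ (EuclideanSpace ℝ (Fin d))).symm
      (fderiv ℝ (ctrans Ω f) x) = x - y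
    rw [← h0]
    exact LinearIsometryEquiv.symm_apply_apply _ _
  exact ⟨y, hyΩ, hgrad, hFx⟩

end CtransAux

/-- Pushforward value of the dual: for a c-concave `f` with `T = id − ∇f^c`,
`(1/2) W₂²(μ, T_#μ) = ∫ f^c dμ + ∫ f d(T_#μ)`. -/
theorem pushforward_dual_value {d : ℕ} (Ω : Set (EuclideanSpace ℝ (Fin d)))
    (hconv : Convex ℝ Ω) (hcomp : IsCompact Ω)
    (μ : Measure (EuclideanSpace ℝ (Fin d))) (hμ : IsProbabilityMeasure μ)
    (hμΩ : μ Ωᶜ = 0) (hac : μ ≪ volume)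
    (f g : EuclideanSpace ℝ (Fin d) → ℝ) (hcc : f = ctrans Ω g)
    (hdiff : ∀ᵐ x ∂μ, DifferentiableAt ℝ (ctrans Ω f) x) :
    (1 / 2 : ℝ) * W2sq μ (μ.map (fun x => x - gradient (ctrans Ω f) x)) =
      (∫ x, ctrans Ω f x ∂μ) +
        ∫ x, f x ∂(μ.map (fun x => x - gradient (ctrans Ω f) x)) := by
  classical
  set F := ctrans Ω f with hF
  set T : EuclideanSpace ℝ (Fin d) → EuclideanSpace ℝ (Fin d) :=
    fun x => x - gradient F x with hT
  have hne : Ω.Nonempty := by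
    by_contra h
    rw [Set.not_nonempty_iff_eq_empty] at h
    rw [h, Set.compl_empty] at hμΩ
    simp [measure_univ] at hμΩ
  have hbd : Bornology.IsBounded Ω := hcomp.isBounded
  obtain ⟨R, hR⟩ := hbd.subset_closedBall 0
  obtain ⟨Cf, hCf⟩ := CtransAux.ctrans_bound hne hbd g
  have hfC : ∀ y ∈ Ω, |f y| ≤ Cf := by rw [hcc]; exact hCf
  have hfA : ∀ y ∈ Ω, f y ≤ Cf := fun y hy => (abs_le.mp (hfC y hy)).2
  have hfusc : UpperSemicontinuous f := by rw [hcc]; exact CtransAux.ctrans_usc hne hbd g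
  have hFusc : UpperSemicontinuous F := CtransAux.ctrans_usc hne hbd f
  obtain ⟨CF, hCF⟩ := CtransAux.ctrans_bound hne hbd f
  have hμae : ∀ᵐ x ∂μ, x ∈ Ω := by
    rw [ae_iff]
    rw [show {x | ¬ x ∈ Ω} = Ωᶜ from rfl]
    exact hμΩ
  have hkey : ∀ᵐ x ∂μ, T x ∈ Ω ∧ F x + f (T x) = ‖x - T x‖ ^ 2 / 2 := by
    filter_upwards [hdiff] with x hdx
    obtain ⟨y, hyΩ, hgrad, hFx⟩ := CtransAux.danskin hcomp hne hfA hfusc hdx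
    have hTx : T x = y := by rw [hT]; simp only [hF, hgrad, sub_sub_cancel]
    rw [hTx]
    refine ⟨hyΩ, ?_⟩
    rw [hF, hFx]
    ring
  have hgradm : Measurable (fun x => gradient F x) :=
    ((InnerProductSpace.toDual ℝ
      (EuclideanSpace ℝ (Fin d))).symm.continuous.measurable).comp (measurable_fderiv ℝ F)
  have hTm : Measurable T := measurable_id.sub hgradm
  have hΩm : MeasurableSet Ω := hcomp.isClosed.measurableSet
  set ν := μ.map T with hν
  have hνprob : IsProbabilityMeasure ν := Measure.isProbabilityMeasure_map hTm.aemeasurable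
  have hνΩ : ν Ωᶜ = 0 := by
    rw [hν, Measure.map_apply hTm hΩm.compl]
    have h1 : ∀ᵐ x ∂μ, ¬ x ∈ T ⁻¹' Ωᶜ := by
      filter_upwards [hkey] with x hx
      simpa using hx.1
    rw [ae_iff] at h1
    rw [show {x | ¬ ¬ x ∈ T ⁻¹' Ωᶜ} = T ⁻¹' Ωᶜ from by ext z; simp] at h1
    exact h1
  have hνae : ∀ᵐ y ∂ν, y ∈ Ω := by
    rw [ae_iff]
    rw [show {y | ¬ y ∈ Ω} = Ωᶜ from rfl]
    exact hνΩ
  have hFmeas : Measurable F := hFusc.measurable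
  have hfmeas : Measurable f := hfusc.measurable
  have hFint : Integrable F μ := by
    refine Integrable.mono' (integrable_const CF) hFmeas.aestronglyMeasurable ?_
    filter_upwards [hμae] with x hx
    exact hCF x hx
  have hfTint : Integrable (fun x => f (T x)) μ := by
    refine Integrable.mono' (integrable_const Cf) (hfmeas.comp hTm).aestronglyMeasurable ?_
    filter_upwards [hkey] with x hx
    exact hfC _ hx.1
  have hfνint : Integrable f ν := by
    refine Integrable.mono' (integrable_const Cf) hfmeas.aestronglyMeasurable ?_
    filter_upwards [hνae] with y hy
    exact hfC y hy
  have hintfν : ∫ y, f y ∂ν = ∫ x, f (T x) ∂μ :=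
    integral_map hTm.aemeasurable hfmeas.aestronglyMeasurable
  set r₀ := ∫ x, ‖x - T x‖ ^ 2 ∂μ with hr₀
  have h1 : r₀ = ∫ x, (2 * F x + 2 * f (T x)) ∂μ := by
    refine integral_congr_ae ?_
    filter_upwards [hkey] with x hx
    have := hx.2
    linarith
  have h2 : ∫ x, (2 * F x + 2 * f (T x)) ∂μ
      = 2 * ∫ x, F x ∂μ + 2 * ∫ x, f (T x) ∂μ := by
    rw [integral_add (hFint.const_mul 2) (hfTint.const_mul 2),
      integral_const_mul, integral_const_mul]
  have hr₀val : r₀ = 2 * ((∫ x, F x ∂μ) + ∫ y, f y ∂ν) := by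
    rw [h1, h2, hintfν]
    ring
  have hpairm : Measurable (fun x => (x, T x)) := measurable_id.prodMk hTm
  have hmem : ∃ π : Measure (EuclideanSpace ℝ (Fin d) × EuclideanSpace ℝ (Fin d)),
      π.map Prod.fst = μ ∧ π.map Prod.snd = ν ∧ r₀ = ∫ p, ‖p.1 - p.2‖ ^ 2 ∂π := by
    refine ⟨μ.map (fun x => (x, T x)), ?_, ?_, ?_⟩
    · rw [Measure.map_map measurable_fst hpairm]
      simp [Function.comp_def]
    · rw [Measure.map_map measurable_snd hpairm]
      rfl
    · rw [integral_map hpairm.aemeasurable]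
      exact (Continuous.aestronglyMeasurable (by fun_prop))
  have hlb : ∀ r ∈ { r : ℝ | ∃ π : Measure (EuclideanSpace ℝ (Fin d) × EuclideanSpace ℝ (Fin d)),
      π.map Prod.fst = μ ∧ π.map Prod.snd = ν ∧ r = ∫ p, ‖p.1 - p.2‖ ^ 2 ∂π }, r₀ ≤ r := by
    rintro r ⟨π, hπ1, hπ2, rfl⟩
    have hπuniv : π Set.univ = 1 := by
      have h := Measure.map_apply (μ := π) measurable_fst MeasurableSet.univ
      rw [hπ1] at h
      rw [Set.preimage_univ] at h
      rw [← h, measure_univ]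
    have hπprob : IsProbabilityMeasure π := ⟨hπuniv⟩
    have hae1 : ∀ᵐ p ∂π, p.1 ∈ Ω := by
      rw [ae_iff]
      have he : {p : EuclideanSpace ℝ (Fin d) × EuclideanSpace ℝ (Fin d) | ¬ p.1 ∈ Ω}
          = Prod.fst ⁻¹' Ωᶜ := rfl
      rw [he, ← Measure.map_apply measurable_fst hΩm.compl, hπ1]
      exact hμΩ
    have hae2 : ∀ᵐ p ∂π, p.2 ∈ Ω := by
      rw [ae_iff]
      have he : {p : EuclideanSpace ℝ (Fin d) × EuclideanSpace ℝ (Fin d) | ¬ p.2 ∈ Ω}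
          = Prod.snd ⁻¹' Ωᶜ := rfl
      rw [he, ← Measure.map_apply measurable_snd hΩm.compl, hπ2]
      exact hνΩ
    have hcost_int : Integrable
        (fun p : EuclideanSpace ℝ (Fin d) × EuclideanSpace ℝ (Fin d) => ‖p.1 - p.2‖ ^ 2) π := by
      refine Integrable.mono' (integrable_const ((2*R)^2))
        (Continuous.aestronglyMeasurable (by fun_prop)) ?_
      filter_upwards [hae1, hae2] with p hp1 hp2
      have e1 : ‖p.1‖ ≤ R := mem_closedBall_zero_iff.mp (hR hp1)
      have e2 : ‖p.2‖ ≤ R := mem_closedBall_zero_iff.mp (hR hp2)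
      have e3 : ‖p.1 - p.2‖ ≤ 2*R := (norm_sub_le _ _).trans (by linarith)
      have e0 : (0:ℝ) ≤ ‖p.1 - p.2‖ := norm_nonneg _
      rw [Real.norm_eq_abs, abs_of_nonneg (by positivity)]
      nlinarith
    have hFfst : Integrable
        (fun p : EuclideanSpace ℝ (Fin d) × EuclideanSpace ℝ (Fin d) => F p.1) π := by
      have hi : Integrable F (π.map Prod.fst) := by rw [hπ1]; exact hFint
      exact (integrable_map_measure hFmeas.aestronglyMeasurable
        measurable_fst.aemeasurable).mp hi
    have hfsnd : Integrable
        (fun p : EuclideanSpace ℝ (Fin d) × EuclideanSpace ℝ (Fin d) => f p.2) π := by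
      have hi : Integrable f (π.map Prod.snd) := by rw [hπ2]; exact hfνint
      exact (integrable_map_measure hfmeas.aestronglyMeasurable
        measurable_snd.aemeasurable).mp hi
    have hmono : ∫ p, (2 * F p.1 + 2 * f p.2) ∂π ≤ ∫ p, ‖p.1 - p.2‖ ^ 2 ∂π := by
      refine integral_mono_ae ((hFfst.const_mul 2).add (hfsnd.const_mul 2)) hcost_int ?_
      filter_upwards [hae2] with p hp2
      have hle := CtransAux.ctrans_le hfA p.1 hp2
      show 2 * F p.1 + 2 * f p.2 ≤ ‖p.1 - p.2‖ ^ 2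
      rw [hF]
      linarith
    have eF : ∫ p : EuclideanSpace ℝ (Fin d) × EuclideanSpace ℝ (Fin d), F p.1 ∂π
        = ∫ x, F x ∂μ := by
      have h := integral_map (μ := π) measurable_fst.aemeasurable
        hFmeas.aestronglyMeasurable (f := F)
      rw [hπ1] at h
      exact h.symm
    have ef : ∫ p : EuclideanSpace ℝ (Fin d) × EuclideanSpace ℝ (Fin d), f p.2 ∂π
        = ∫ y, f y ∂ν := by
      have h := integral_map (μ := π) measurable_snd.aemeasurable
        hfmeas.aestronglyMeasurable (f := f)
      rw [hπ2] at h
      exact h.symm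
    have hsplit : ∫ p, (2 * F p.1 + 2 * f p.2) ∂π
        = 2 * (∫ x, F x ∂μ) + 2 * (∫ y, f y ∂ν) := by
      rw [integral_add (hFfst.const_mul 2) (hfsnd.const_mul 2),
        integral_const_mul, integral_const_mul, eF, ef]
    rw [hr₀val]
    rw [hsplit] at hmono
    linarith
  have hW : W2sq μ ν = r₀ := by
    unfold W2sq
    exact IsLeast.csInf_eq ⟨hmem, hlb⟩
  rw [hW, hr₀val]
  ring
end
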